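/- Let G be a finite split graph with clique number ω and let C be a positive integer. Then G has a [⌈ω/C⌉ + 1, C]-partition. -/

import Mathlib

/-- Reachability inside a set `S`: there is a walk from `u` to `v` all of whose
vertices lie in `S`. -/
def ReachIn {V : Type*} (G : SimpleGraph V) (S : Set V) (u v : V) : Prop :=
  Relation.ReflTransGen (fun a b => G.Adj a b ∧ a ∈ S ∧ b ∈ S) u v

/-- The subgraph induced by `S` is connected. -/
def ConnectedIn {V : Type*} (G : SimpleGraph V) (S : Set V) : Prop :=
  ∀ u ∈ S, ∀ v ∈ S, ReachIn G S u v

/-- A `[λ,C]`-coloring of `G` with colors `Fin L`: every monochromatic component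
(connected component of the subgraph induced by a color class) has at most `C`
vertices. -/
def IsLCColoring {V : Type*} (G : SimpleGraph V) (C : ℕ) {L : ℕ} (c : V → Fin L) : Prop :=
  ∀ v : V, {u | ReachIn G {w | c w = c v} v u}.ncard ≤ C

/-- A `[λ,C]`-partition of `G`: a partition of the vertex set such that every part
induces a connected subgraph, every part has at most `C` vertices, and every
clique of `G` meets at most `L` parts. -/
def IsLCPartition {V : Type*} (G : SimpleGraph V) (L C : ℕ) (Ps : Set (Set V)) : Prop :=
  (∀ P ∈ Ps, P.Nonempty) ∧ Ps.PairwiseDisjoint id ∧ ⋃₀ Ps = Set.univ ∧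
    (∀ P ∈ Ps, ConnectedIn G P ∧ P.ncard ≤ C) ∧
    ∀ K : Set V, G.IsClique K → {P ∈ Ps | (P ∩ K).Nonempty}.ncard ≤ L

/-- `G` is a split graph: its vertex set is the disjoint union of an independent
set and a clique. -/
def IsSplitGraph {V : Type*} (G : SimpleGraph V) : Prop :=
  ∃ S K : Set V, Disjoint S K ∧ S ∪ K = Set.univ ∧
    (∀ u ∈ S, ∀ v ∈ S, ¬ G.Adj u v) ∧ G.IsClique K

/-- The clique number of `G`. -/
noncomputable def cliqueNumber {V : Type*} (G : SimpleGraph V) : ℕ :=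
  sSup {m | ∃ s : Finset V, G.IsNClique m s}

set_option maxHeartbeats 1000000 in
/-- every finite split graph has a `[⌈ω/C⌉ + 1, C]`-partition
(the ceiling written with natural division). -/
theorem split_graph_partition {V : Type*} [Fintype V] (G : SimpleGraph V)
    (hsplit : IsSplitGraph G) (C : ℕ) (hC : 0 < C) :
    ∃ Ps : Set (Set V), IsLCPartition G ((cliqueNumber G + C - 1) / C + 1) C Ps := by
  classical
  obtain ⟨S, K, hdisj, hunion, hS, hK⟩ := hsplit
  set KF : Finset V := (Set.toFinite K).toFinset with hKF
  set l : List V := KF.toList with hl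
  set k : ℕ := KF.card with hk
  set m : ℕ := (k + C - 1) / C with hm
  have hmemK : ∀ v, v ∈ K ↔ v ∈ l := by
    intro v; rw [hl, Finset.mem_toList, hKF, Set.Finite.mem_toFinset]
  have hlen : l.length = k := Finset.length_toList KF
  set idx : V → ℕ := fun v => l.idxOf v with hidx
  have hidx_lt : ∀ v ∈ K, idx v < k := by
    intro v hv; rw [← hlen]; exact List.idxOf_lt_length_iff.2 ((hmemK v).1 hv)
  have hidx_inj : ∀ v ∈ K, ∀ w ∈ K, idx v = idx w → v = w := by
    intro v hv w hw h
    exact (List.idxOf_inj ((hmemK v).1 hv)).1 h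
  have hsurj : ∀ j < k, ∃ v ∈ K, idx v = j := by
    intro j hj
    have hjl : j < l.length := by omega
    refine ⟨l[j], (hmemK _).2 (List.getElem_mem hjl), ?_⟩
    exact List.Nodup.idxOf_getElem (KF.nodup_toList) j hjl
  -- clique number bound
  have hkω : k ≤ cliqueNumber G := by
    apply le_csSup
    · exact ⟨Fintype.card V, fun n ⟨s, hs⟩ => by
        rw [← hs.2]; simpa using Finset.card_le_univ s⟩
    · exact ⟨KF, ⟨by rw [hKF, Set.Finite.coe_toFinset]; exact hK, hk.symm⟩⟩
  -- arithmetic facts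
  have hdm : C * m + (k + C - 1) % C = k + C - 1 := by
    rw [hm]; exact Nat.div_add_mod _ _
  have hmod := Nat.mod_lt (k + C - 1) hC
  have hkmC : k ≤ C * m := by omega
  have hlt_m : ∀ j, j < k → j / C < m := by
    intro j hj
    exact Nat.div_lt_of_lt_mul (lt_of_lt_of_le hj hkmC)
  have hiCk : ∀ i, i < m → i * C < k := by
    intro i hi
    have h1 : C * (i + 1) ≤ C * m := Nat.mul_le_mul_left C hi
    have h2 : C * (i + 1) = C * i + C := Nat.mul_succ C i
    have h3 : i * C = C * i := Nat.mul_comm i C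
    omega
  set B : ℕ → Set V := fun i => {v | v ∈ K ∧ idx v / C = i} with hB
  have hBsub : ∀ i, B i ⊆ K := fun i v hv => hv.1
  have hBconn : ∀ i, ConnectedIn G (B i) := by
    intro i u hu v hv
    rcases eq_or_ne u v with rfl | hne
    · exact Relation.ReflTransGen.refl
    · exact Relation.ReflTransGen.single ⟨hK hu.1 hv.1 hne, hu, hv⟩
  have hBcard : ∀ i, (B i).ncard ≤ C := by
    intro i
    have : (B i).ncard ≤ ((Finset.Ico (i*C) (i*C+C) : Finset ℕ) : Set ℕ).ncard := by
      refine Set.ncard_le_ncard_of_injOn idx ?_ ?_ ((Finset.Ico (i*C) (i*C+C)).finite_toSet)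
      · intro v hv
        have h1 := hv.2
        have h2 := Nat.div_add_mod (idx v) C
        have h3 := Nat.mod_lt (idx v) hC
        have h4 : i * C = C * i := Nat.mul_comm i C
        simp only [Finset.coe_Ico, Set.mem_Ico]
        rw [h1] at h2
        omega
      · intro v hv w hw h; exact hidx_inj v hv.1 w hw.1 h
    rwa [Set.ncard_coe_finset, Nat.card_Ico, Nat.add_sub_cancel_left] at this
  have hBne : ∀ i < m, (B i).Nonempty := by
    intro i hi
    obtain ⟨v, hv, hvi⟩ := hsurj (i*C) (hiCk i hi)
    exact ⟨v, hv, by rw [hvi, Nat.mul_div_cancel _ hC]⟩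
  set Ps : Set (Set V) := {P | ∃ s ∈ S, P = {s}} ∪ (B '' Set.Iio m) with hPs
  refine ⟨Ps, ?_, ?_, ?_, ?_, ?_⟩
  · rintro P (⟨s, _, rfl⟩ | ⟨i, hi, rfl⟩)
    · exact ⟨s, rfl⟩
    · exact hBne i hi
  · rintro P (⟨s, hs, rfl⟩ | ⟨i, hi, rfl⟩) Q (⟨t, ht, rfl⟩ | ⟨j, hj, rfl⟩) hne
    · refine Set.disjoint_singleton.2 fun h => hne (by rw [h])
    · exact Set.disjoint_left.2 fun x hx hxB =>
        (Set.disjoint_left.1 hdisj (hx ▸ hs) (hBsub j hxB))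
    · exact Set.disjoint_left.2 fun x hxB hx =>
        (Set.disjoint_left.1 hdisj (hx ▸ ht) (hBsub i hxB))
    · rcases eq_or_ne i j with rfl | hij
      · exact absurd rfl hne
      · exact Set.disjoint_left.2 fun x hxi hxj => hij (hxi.2 ▸ hxj.2)
  · ext v
    simp only [Set.mem_sUnion, Set.mem_univ, iff_true]
    have hv : v ∈ S ∪ K := hunion ▸ Set.mem_univ v
    rcases hv with hv | hv
    · exact ⟨{v}, Or.inl ⟨v, hv, rfl⟩, rfl⟩
    · exact ⟨B (idx v / C), Or.inr ⟨idx v / C, hlt_m _ (hidx_lt v hv), rfl⟩, hv, rfl⟩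
  · rintro P (⟨s, hs, rfl⟩ | ⟨i, hi, rfl⟩)
    · refine ⟨?_, by simp [Set.ncard_singleton]; omega⟩
      intro u hu v hv
      rw [Set.mem_singleton_iff] at hu hv
      rw [hu, hv]
      exact Relation.ReflTransGen.refl
    · exact ⟨hBconn i, hBcard i⟩
  · intro K' hK'
    set T1 : Set (Set V) := {P | ∃ s ∈ S ∩ K', P = {s}} with hT1
    have hsub : {P ∈ Ps | (P ∩ K').Nonempty} ⊆
        T1 ∪ (B '' Set.Iio m) := by
      rintro P ⟨(⟨s, hs, rfl⟩ | hB'), hne⟩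
      · obtain ⟨x, hx1, hx2⟩ := hne
        rw [Set.mem_singleton_iff] at hx1
        exact Or.inl ⟨s, ⟨hs, hx1 ▸ hx2⟩, rfl⟩
      · exact Or.inr hB'
    have heq : T1 = (fun s => ({s} : Set V)) '' (S ∩ K') := by
      ext P
      simp only [Set.mem_image, Set.mem_setOf_eq, eq_comm]
      exact Iff.rfl
    have hfin1 : T1.Finite := by
      rw [heq]; exact ((S ∩ K').toFinite).image _
    have hfin2 : (B '' Set.Iio m).Finite := (Set.finite_Iio m).image B
    calc {P ∈ Ps | (P ∩ K').Nonempty}.ncard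
        ≤ (T1 ∪ (B '' Set.Iio m)).ncard :=
          Set.ncard_le_ncard hsub (hfin1.union hfin2)
      _ ≤ T1.ncard + (B '' Set.Iio m).ncard :=
          Set.ncard_union_le _ _
      _ ≤ 1 + m := by
          gcongr
          · refine (Set.ncard_le_one_iff hfin1).2 ?_
            intro P Q hP hQ
            obtain ⟨s, hs, rfl⟩ := hP
            obtain ⟨t, ht, rfl⟩ := hQ
            congr 1
            by_contra hne
            exact hS s hs.1 t ht.1 (hK' hs.2 ht.2 hne)
          · calc (B '' Set.Iio m).ncard ≤ (Set.Iio m).ncard :=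
                  Set.ncard_image_le (Set.finite_Iio m)
              _ = m := by rw [← Finset.coe_range, Set.ncard_coe_finset, Finset.card_range]
      _ ≤ (cliqueNumber G + C - 1) / C + 1 := by
          have : m ≤ (cliqueNumber G + C - 1) / C :=
            Nat.div_le_div_right (by omega)
          omega
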